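/- A group Γ is amenable if and only if whenever Γ acts on a nonempty compact Hausdorff topological space K by homeomorphisms, there exists a Γ-invariant Borel probability measure on K (a Borel probability measure μ with μ(γ⁻¹A) = μ(A) for every γ ∈ Γ and every Borel set A ⊆ K). -/

import Mathlib

set_option linter.unusedSectionVars false
set_option maxHeartbeats 1000000

open MeasureTheory

/-- A group `Γ` is amenable if it admits a finitely additive, left-invariant probability
measure defined on all of its subsets. -/
def Amenable (Γ : Type*) [Group Γ] : Prop :=
  ∃ m : Set Γ → ℝ,
    (∀ A : Set Γ, 0 ≤ m A) ∧ (∀ A : Set Γ, m A ≤ 1) ∧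
    m (Set.univ : Set Γ) = 1 ∧
    (∀ A B : Set Γ, Disjoint A B → m (A ∪ B) = m A + m B) ∧
    (∀ (γ : Γ) (A : Set Γ), m ((γ * ·) '' A) = m A)

universe u

namespace AmenableAux

open Filter Set TopologicalSpace
open scoped ENNReal NNReal


variable {Γ : Type u} [Group Γ]

def basic (A : Set Γ) : Set (Ultrafilter Γ) := {U | A ∈ U}
lemma mem_basic {A : Set Γ} {U : Ultrafilter Γ} : U ∈ basic A ↔ A ∈ U := Iff.rfl
lemma isOpen_basic (A : Set Γ) : IsOpen (basic A) := ultrafilter_isOpen_basic A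
lemma basic_mono {A B : Set Γ} (h : A ⊆ B) : basic A ⊆ basic B :=
  fun _ hU => Filter.mem_of_superset hU h
lemma basic_univ : basic (Set.univ : Set Γ) = Set.univ :=
  Set.eq_univ_of_forall fun _ => Filter.univ_mem

/-- If two ultrafilters are distinct there is a set in one whose complement is in the other. -/
lemma exists_mem_compl_mem {U V : Ultrafilter Γ} (h : U ≠ V) :
    ∃ A : Set Γ, A ∈ U ∧ Aᶜ ∈ V := by
  by_contra hc
  push_neg at hc
  apply h
  ext s
  constructor
  · intro hs
    by_contra hsV
    exact hc s hs (Ultrafilter.compl_mem_iff_notMem.mpr hsV)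
  · intro hs
    by_contra hsU
    refine hc sᶜ (Ultrafilter.compl_mem_iff_notMem.mpr hsU) ?_
    rwa [compl_compl]

/-- Separate a compact set from an ultrafilter not in it. -/
lemma exists_sep_point {C : Set (Ultrafilter Γ)} (hC : IsCompact C) {V : Ultrafilter Γ}
    (hV : V ∉ C) : ∃ S : Set Γ, C ⊆ basic S ∧ Sᶜ ∈ V := by
  classical
  have hch : ∀ U : Ultrafilter Γ, ∃ A : Set Γ, U ∈ C → A ∈ U ∧ Aᶜ ∈ V := by
    intro U
    by_cases hU : U ∈ C
    · obtain ⟨A, hA⟩ := exists_mem_compl_mem (show U ≠ V from fun h => hV (h ▸ hU))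
      exact ⟨A, fun _ => hA⟩
    · exact ⟨∅, fun h => absurd h hU⟩
  choose f hf using hch
  set g : Ultrafilter Γ → Set Γ := fun U => if U ∈ C then f U else ∅ with hg
  have hcov : C ⊆ ⋃ U : Ultrafilter Γ, basic (g U) := by
    intro U hU
    exact Set.mem_iUnion.mpr ⟨U, by simp only [hg, if_pos hU]; exact (hf U hU).1⟩
  obtain ⟨t, ht⟩ := hC.elim_finite_subcover (fun U => basic (g U)) (fun U => isOpen_basic _) hcov
  refine ⟨⋃ U ∈ t, g U, ?_, ?_⟩
  · refine ht.trans ?_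
    refine Set.iUnion₂_subset fun U hU => basic_mono ?_
    intro x hx
    exact Set.mem_biUnion hU hx
  · rw [Set.compl_iUnion₂]
    refine ((Filter.biInter_finset_mem t).mpr ?_ : _ ∈ (V : Filter Γ))
    intro U hU
    by_cases hUC : U ∈ C
    · simp only [hg, if_pos hUC]; exact (hf U hUC).2
    · simp only [hg, if_neg hUC, Set.compl_empty]; exact Filter.univ_mem

/-- Disjoint compact subsets of the ultrafilter space are separated by a basic clopen set. -/
lemma exists_sep {C₁ C₂ : Set (Ultrafilter Γ)} (h₁ : IsCompact C₁) (h₂ : IsCompact C₂)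
    (hd : Disjoint C₁ C₂) : ∃ S : Set Γ, C₁ ⊆ basic S ∧ C₂ ⊆ basic Sᶜ := by
  classical
  have hch : ∀ V : Ultrafilter Γ, ∃ S : Set Γ, V ∈ C₂ → (C₁ ⊆ basic S ∧ Sᶜ ∈ V) := by
    intro V
    by_cases hV : V ∈ C₂
    · obtain ⟨S, hS⟩ := exists_sep_point h₁ (Set.disjoint_right.mp hd hV)
      exact ⟨S, fun _ => hS⟩
    · exact ⟨∅, fun h => absurd h hV⟩
  choose f hf using hch
  set g : Ultrafilter Γ → Set Γ := fun V => if V ∈ C₂ then f V else Set.univ with hg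
  have hcov : C₂ ⊆ ⋃ V : Ultrafilter Γ, basic (g V)ᶜ := by
    intro V hV
    refine Set.mem_iUnion.mpr ⟨V, ?_⟩
    simp only [hg, if_pos hV]
    exact (hf V hV).2
  obtain ⟨t, ht⟩ := h₂.elim_finite_subcover (fun V => basic (g V)ᶜ)
    (fun V => isOpen_basic _) hcov
  refine ⟨⋂ V ∈ t, g V, ?_, ?_⟩
  · intro U hU
    refine ((Filter.biInter_finset_mem t).mpr ?_ : _ ∈ (U : Filter Γ))
    intro V hV
    by_cases hVC : V ∈ C₂
    · simp only [hg, if_pos hVC]; exact (hf V hVC).1 hU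
    · simp only [hg, if_neg hVC]
      exact Filter.univ_mem
  · refine ht.trans ?_
    refine Set.iUnion₂_subset fun V hV => basic_mono ?_
    rw [Set.compl_iInter₂]
    intro x hx
    exact Set.mem_biUnion hV hx

instance : MulAction Γ (Ultrafilter Γ) where
  smul γ U := U.map (γ * ·)
  one_smul U := by
    show U.map _ = U
    have : (fun g : Γ => 1 * g) = id := by funext g; simp
    rw [this, Ultrafilter.map_id]
  mul_smul γ δ U := by
    show U.map _ = (U.map _).map _
    rw [Ultrafilter.map_map]
    congr 1
    funext g
    simp [Function.comp, mul_assoc]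

lemma smul_def (γ : Γ) (U : Ultrafilter Γ) : γ • U = U.map (γ * ·) := rfl

lemma mem_smul {γ : Γ} {A : Set Γ} {U : Ultrafilter Γ} :
    A ∈ γ • U ↔ (γ * ·) ⁻¹' A ∈ U := Ultrafilter.mem_map

lemma preimage_smul_basic (γ : Γ) (A : Set Γ) :
    (fun U : Ultrafilter Γ => γ • U) ⁻¹' basic A = basic ((γ * ·) ⁻¹' A) := by
  ext U; exact mem_smul

instance : ContinuousConstSMul Γ (Ultrafilter Γ) := by
  constructor
  intro γ
  have : Ultrafilter.topologicalSpace (α := Γ) =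
      TopologicalSpace.generateFrom (ultrafilterBasis Γ) := rfl
  apply continuous_generateFrom_iff.mpr
  rintro s ⟨A, rfl⟩
  exact isOpen_basic ((γ * ·) ⁻¹' A)


section Content

variable (m : Set Γ → ℝ)

/-- The `ℝ≥0∞`-valued version of a finitely additive mean. -/
noncomputable def mE (A : Set Γ) : ℝ≥0∞ := ENNReal.ofReal (m A)

/-- Outer approximation of subsets of the ultrafilter space by basic sets. -/
noncomputable def F (s : Set (Ultrafilter Γ)) : ℝ≥0∞ :=
  ⨅ (A : Set Γ) (_ : s ⊆ basic A), mE m A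

variable {m}

lemma F_le {s : Set (Ultrafilter Γ)} {A : Set Γ} (h : s ⊆ basic A) : F m s ≤ mE m A :=
  iInf₂_le A h

lemma le_F {s : Set (Ultrafilter Γ)} {x : ℝ≥0∞} (h : ∀ A : Set Γ, s ⊆ basic A → x ≤ mE m A) :
    x ≤ F m s :=
  le_iInf₂ h

variable (h0 : ∀ A : Set Γ, 0 ≤ m A) (h1 : ∀ A : Set Γ, m A ≤ 1)
  (huniv : m Set.univ = 1)
  (hadd : ∀ A B : Set Γ, Disjoint A B → m (A ∪ B) = m A + m B)
  (hinv : ∀ (γ : Γ) (A : Set Γ), m ((γ * ·) '' A) = m A)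

include h0 hadd in
lemma m_mono {A B : Set Γ} (h : A ⊆ B) : m A ≤ m B := by
  have hd : Disjoint A (B \ A) := Set.disjoint_sdiff_right
  have : m B = m A + m (B \ A) := by rw [← hadd A (B \ A) hd, Set.union_diff_cancel h]
  linarith [h0 (B \ A)]

include h0 hadd in
lemma mE_union_le (A B : Set Γ) : mE m (A ∪ B) ≤ mE m A + mE m B := by
  have hd : Disjoint A (B \ A) := Set.disjoint_sdiff_right
  have h2 : A ∪ B = A ∪ (B \ A) := by simp
  have h3 : m (A ∪ B) = m A + m (B \ A) := by rw [h2, hadd A (B \ A) hd]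
  have h4 : m (A ∪ B) ≤ m A + m B := by
    have := m_mono h0 hadd (Set.diff_subset : B \ A ⊆ B)
    linarith
  calc mE m (A ∪ B) ≤ ENNReal.ofReal (m A + m B) := ENNReal.ofReal_le_ofReal h4
    _ = mE m A + mE m B := ENNReal.ofReal_add (h0 A) (h0 B)

include h1 huniv in
lemma F_le_one (s : Set (Ultrafilter Γ)) : F m s ≤ 1 := by
  refine (F_le (by rw [basic_univ]; exact Set.subset_univ s)).trans ?_
  simp [mE, huniv]

include h1 huniv in
lemma F_ne_top (s : Set (Ultrafilter Γ)) : F m s ≠ ⊤ :=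
  ((F_le_one h1 huniv s).trans_lt ENNReal.one_lt_top).ne

lemma F_mono {s t : Set (Ultrafilter Γ)} (h : s ⊆ t) : F m s ≤ F m t :=
  le_F fun A hA => F_le (h.trans hA)

include h0 hadd in
lemma F_union_le (s t : Set (Ultrafilter Γ)) : F m (s ∪ t) ≤ F m s + F m t := by
  have : F m s + F m t =
      ⨅ (A : Set Γ) (_ : s ⊆ basic A) (B : Set Γ) (_ : t ⊆ basic B), (mE m A + mE m B) := by
    simp_rw [F, ENNReal.iInf_add, ENNReal.add_iInf]
  rw [this]
  refine le_iInf₂ fun A hA => le_iInf₂ fun B hB => ?_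
  refine (F_le (Set.union_subset (hA.trans (basic_mono Set.subset_union_left))
    (hB.trans (basic_mono Set.subset_union_right)))).trans ?_
  exact mE_union_le h0 hadd A B

include h0 hadd in
lemma F_union_disjoint {s t : Set (Ultrafilter Γ)} (hs : IsCompact s) (ht : IsCompact t)
    (hd : Disjoint s t) : F m (s ∪ t) = F m s + F m t := by
  refine le_antisymm (F_union_le h0 hadd s t) ?_
  refine le_F fun D hD => ?_
  obtain ⟨S, hS₁, hS₂⟩ := exists_sep hs ht hd
  have hsD : s ⊆ basic (D ∩ S) := fun U hU => Filter.inter_mem (hD (Or.inl hU)) (hS₁ hU)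
  have htD : t ⊆ basic (D ∩ Sᶜ) := fun U hU => Filter.inter_mem (hD (Or.inr hU)) (hS₂ hU)
  have hdisj : Disjoint (D ∩ S) (D ∩ Sᶜ) :=
    (disjoint_compl_right (a := S)).mono Set.inter_subset_right Set.inter_subset_right
  have hDeq : (D ∩ S) ∪ (D ∩ Sᶜ) = D := by rw [← Set.inter_union_distrib_left]; simp
  calc F m s + F m t ≤ mE m (D ∩ S) + mE m (D ∩ Sᶜ) := add_le_add (F_le hsD) (F_le htD)
    _ = ENNReal.ofReal (m (D ∩ S) + m (D ∩ Sᶜ)) :=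
        (ENNReal.ofReal_add (h0 _) (h0 _)).symm
    _ = mE m D := by rw [← hadd _ _ hdisj, hDeq]; rfl

include hinv in
lemma mE_preimage (γ : Γ) (A : Set Γ) : mE m ((γ * ·) ⁻¹' A) = mE m A := by
  have : (γ * ·) ⁻¹' A = (γ⁻¹ * ·) '' A := by
    ext x
    constructor
    · intro hx; exact ⟨γ * x, hx, by group⟩
    · rintro ⟨a, ha, rfl⟩; simpa using ha
  rw [mE, this, hinv γ⁻¹ A]; rfl

include hinv in
lemma F_smul_image (γ : Γ) (C : Set (Ultrafilter Γ)) :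
    F m ((fun U : Ultrafilter Γ => γ • U) '' C) = F m C := by
  have himg1 : ∀ {B : Set Γ}, C ⊆ basic B →
      (fun U : Ultrafilter Γ => γ • U) '' C ⊆ basic ((γ * ·) '' B) := by
    intro B hB
    rintro _ ⟨W, hW, rfl⟩
    rw [mem_basic, mem_smul, Set.preimage_image_eq _ (mul_right_injective γ)]
    exact hB hW
  have himg2 : ∀ {A : Set Γ}, (fun U : Ultrafilter Γ => γ • U) '' C ⊆ basic A →
      C ⊆ basic ((γ * ·) ⁻¹' A) := by
    intro A hA W hW
    exact mem_smul.mp (hA ⟨W, hW, rfl⟩)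
  refine le_antisymm ?_ ?_
  · refine le_F fun B hB => ?_
    have : mE m ((γ * ·) '' B) = mE m B := by rw [mE, hinv γ B]; rfl
    exact (F_le (himg1 hB)).trans this.le
  · refine le_F fun A hA => ?_
    exact (F_le (himg2 hA)).trans (mE_preimage hinv γ A).le

include h0 h1 huniv hadd in
/-- The content on the ultrafilter space built from a finitely additive mean. -/
noncomputable def mkContent : MeasureTheory.Content (Ultrafilter Γ) where
  toFun C := (F m (C : Set (Ultrafilter Γ))).toNNReal
  mono' C₁ C₂ h := ENNReal.toNNReal_mono (F_ne_top h1 huniv _) (F_mono h)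
  sup_disjoint' C₁ C₂ hd _ _ := by
    simp only [Compacts.coe_sup]
    rw [F_union_disjoint h0 hadd C₁.isCompact C₂.isCompact hd,
      ENNReal.toNNReal_add (F_ne_top h1 huniv _) (F_ne_top h1 huniv _)]
  sup_le' C₁ C₂ := by
    simp only [Compacts.coe_sup]
    rw [← ENNReal.toNNReal_add (F_ne_top h1 huniv _) (F_ne_top h1 huniv _)]
    exact ENNReal.toNNReal_mono
      (ENNReal.add_ne_top.mpr ⟨F_ne_top h1 huniv _, F_ne_top h1 huniv _⟩)
      (F_union_le h0 hadd _ _)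

include h0 h1 huniv hadd in
lemma mkContent_apply (C : Compacts (Ultrafilter Γ)) :
    (mkContent h0 h1 huniv hadd C : ℝ≥0∞) = F m (C : Set (Ultrafilter Γ)) := by
  show ((F m (C : Set (Ultrafilter Γ))).toNNReal : ℝ≥0∞) = _
  exact ENNReal.coe_toNNReal (F_ne_top h1 huniv _)

include h1 huniv in
lemma F_univ : F m (Set.univ : Set (Ultrafilter Γ)) = 1 := by
  refine le_antisymm (F_le_one h1 huniv _) (le_F fun A hA => ?_)
  have : A = Set.univ := by
    refine Set.eq_univ_of_forall fun γ => ?_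
    have : (pure γ : Ultrafilter Γ) ∈ basic A := hA (Set.mem_univ _)
    exact this
  rw [this]
  simp [mE, huniv]

end Content

end AmenableAux

open AmenableAux Filter Set TopologicalSpace
open scoped ENNReal

/-- A group is amenable if and only if every action of it by homeomorphisms on a nonempty
compact Hausdorff space admits an invariant Borel probability measure. -/
theorem amenable_iff_invariant_measure (Γ : Type u) [Group Γ] :
    Amenable Γ ↔
      ∀ (K : Type u) [TopologicalSpace K] [MeasurableSpace K] [BorelSpace K]
        [CompactSpace K] [T2Space K] [Nonempty K] [MulAction Γ K],
        (∀ γ : Γ, Continuous fun x : K => γ • x) →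
        ∃ μ : Measure K, IsProbabilityMeasure μ ∧
          ∀ (γ : Γ) (A : Set K), MeasurableSet A → μ ((fun x : K => γ • x) ⁻¹' A) = μ A := by
  constructor
  · rintro ⟨m, h0, h1, huniv, hadd, hinv⟩
    intro K _ _ _ _ _ _ _ hcontK
    letI : MeasurableSpace (Ultrafilter Γ) := borel _
    haveI : BorelSpace (Ultrafilter Γ) := ⟨rfl⟩
    set μc : MeasureTheory.Content (Ultrafilter Γ) := mkContent h0 h1 huniv hadd with hμc
    obtain ⟨x₀⟩ := ‹Nonempty K›
    set f : Γ → K := fun g => g • x₀ with hf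
    set φ : Ultrafilter Γ → K := Ultrafilter.extend f with hφ
    have hφc : Continuous φ := continuous_ultrafilter_extend f
    have hφe : ∀ (γ : Γ) (U : Ultrafilter Γ), φ (γ • U) = γ • φ U := by
      intro γ U
      have hU1 : ↑(U.map f) ≤ nhds (φ U) := ultrafilter_extend_eq_iff.mp rfl
      have hU2 : Filter.Tendsto f ↑U (nhds (φ U)) := by
        rw [Ultrafilter.coe_map] at hU1
        exact hU1
      refine ultrafilter_extend_eq_iff.mpr ?_
      have h3 : (γ • U).map f = U.map fun g => γ • f g := by
        show (U.map (γ * ·)).map f = _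
        rw [Ultrafilter.map_map]
        congr 1
        funext g
        show f (γ * g) = γ • f g
        rw [hf]
        simp [mul_smul]
      rw [h3, Ultrafilter.coe_map]
      exact ((hcontK γ).tendsto (φ U)).comp hU2
    have hKmap : ∀ (γ : Γ) (C : Compacts (Ultrafilter Γ)),
        μc (C.map _ (continuous_const_smul γ)) = μc C := by
      intro γ C
      rw [hμc, mkContent_apply h0 h1 huniv hadd, mkContent_apply h0 h1 huniv hadd,
        Compacts.coe_map]
      exact F_smul_image hinv γ (C : Set (Ultrafilter Γ))
    have hmeas_inv : ∀ (γ : Γ) (s : Set (Ultrafilter Γ)), MeasurableSet s →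
        μc.measure ((fun U : Ultrafilter Γ => γ • U) ⁻¹' s) = μc.measure s := by
      intro γ s hs
      have hms : MeasurableSet ((fun U : Ultrafilter Γ => γ • U) ⁻¹' s) :=
        (continuous_const_smul γ).measurable hs
      rw [μc.measure_apply hs, μc.measure_apply hms]
      exact μc.outerMeasure_preimage (Homeomorph.smul γ) (fun C => hKmap γ C) s
    have htotal : μc.measure Set.univ = 1 := by
      rw [μc.measure_apply MeasurableSet.univ,
        μc.outerMeasure_of_isOpen Set.univ isOpen_univ,
        μc.innerContent_of_isCompact isCompact_univ isOpen_univ, hμc,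
        mkContent_apply h0 h1 huniv hadd]
      exact F_univ h1 huniv
    refine ⟨(μc.measure).map φ, ?_, ?_⟩
    · constructor
      rw [Measure.map_apply hφc.measurable MeasurableSet.univ, Set.preimage_univ, htotal]
    · intro γ A hA
      have hA' : MeasurableSet ((fun x : K => γ • x) ⁻¹' A) := (hcontK γ).measurable hA
      rw [Measure.map_apply hφc.measurable hA', Measure.map_apply hφc.measurable hA]
      have hpre : φ ⁻¹' ((fun x : K => γ • x) ⁻¹' A)
          = (fun U : Ultrafilter Γ => γ • U) ⁻¹' (φ ⁻¹' A) := by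
        ext U
        simp only [Set.mem_preimage]
        rw [← hφe γ U]
      rw [hpre]
      exact hmeas_inv γ _ (hφc.measurable hA)
  · intro H
    haveI : Nonempty (Ultrafilter Γ) := ⟨pure 1⟩
    letI : MeasurableSpace (Ultrafilter Γ) := borel _
    haveI : BorelSpace (Ultrafilter Γ) := ⟨rfl⟩
    obtain ⟨μ, hprob, hinv⟩ := H (Ultrafilter Γ) fun γ => continuous_const_smul γ
    have hbm : ∀ A : Set Γ, MeasurableSet (basic A) :=
      fun A => (isOpen_basic A).measurableSet
    have hfin : ∀ A : Set Γ, μ (basic A) ≠ ⊤ := fun A => measure_ne_top μ _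
    refine ⟨fun A => (μ (basic A)).toReal, fun A => ENNReal.toReal_nonneg, ?_, ?_, ?_, ?_⟩
    · intro A
      simpa using ENNReal.toReal_mono ENNReal.one_ne_top (prob_le_one (μ := μ))
    · show (μ (basic (Set.univ : Set Γ))).toReal = 1
      rw [basic_univ, measure_univ, ENNReal.toReal_one]
    · intro A B hAB
      have hdisj : Disjoint (basic A) (basic B) := by
        rw [Set.disjoint_left]
        intro U hA hB
        have hmem : A ∩ B ∈ U := Filter.inter_mem hA hB
        rw [Set.disjoint_iff_inter_eq_empty.mp hAB] at hmem
        exact Filter.empty_notMem (U : Filter Γ) (Ultrafilter.mem_coe.mpr hmem)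
      have hun : basic (A ∪ B) = basic A ∪ basic B := by
        ext U
        exact Ultrafilter.union_mem_iff
      show (μ (basic (A ∪ B))).toReal = (μ (basic A)).toReal + (μ (basic B)).toReal
      rw [hun, measure_union hdisj (hbm B), ENNReal.toReal_add (hfin A) (hfin B)]
    · intro γ A
      have key : basic ((γ * ·) '' A)
          = (fun U : Ultrafilter Γ => γ⁻¹ • U) ⁻¹' basic A := by
        ext U
        rw [Set.mem_preimage, mem_basic, mem_basic, AmenableAux.mem_smul]
        have himg : (γ⁻¹ * ·) ⁻¹' A = (γ * ·) '' A := by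
          ext x
          constructor
          · intro hx
            exact ⟨γ⁻¹ * x, hx, by group⟩
          · rintro ⟨a, ha, rfl⟩
            simpa using ha
        rw [himg]
      show (μ (basic ((γ * ·) '' A))).toReal = (μ (basic A)).toReal
      rw [key, hinv γ⁻¹ _ (hbm A)]
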